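/- Let m be a σ-finite measure, N < 0, N' ∈ [N,0), and let μ = Σ_j α_j μ_j be a countable convex combination (α_j ≥ 0, Σ_j α_j = 1) of probability measures μ_j = ρ_j m absolutely continuous with respect to m. Then S_{N',m}(μ) ≥ Σ_j α_j^{1−1/N'} S_{N',m}(μ_j), and equality holds if the measures μ_j are pairwise mutually singular. -/

import Mathlib

open MeasureTheory Set Metric ENNReal Filter Topology
open scoped Classical

noncomputable section

/-- The (topological) support of a measure: the set of points all of whose open
neighbourhoods have positive measure. -/
def msupport {α : Type*} [TopologicalSpace α] [MeasurableSpace α]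
    (μ : Measure α) : Set α :=
  {x | ∀ U : Set α, IsOpen U → x ∈ U → 0 < μ U}

/-- Borel measurable structure on the space of continuous curves `C([0,1]; Y)`. -/
instance contCurveMeasurableSpace {Y : Type*} [TopologicalSpace Y] :
    MeasurableSpace C(unitInterval, Y) := borel _

/-- The distortion coefficient `σ_{K,N}^{(t)}(θ)` (finite part, real-valued). -/
def sigmaAux (K N t θ : ℝ) : ℝ :=
  if K * θ ^ 2 < 0 then
    Real.sin (t * θ * Real.sqrt (K / N)) / Real.sin (θ * Real.sqrt (K / N))
  else if K * θ ^ 2 = 0 then t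
  else Real.sinh (t * θ * Real.sqrt (-K / N)) / Real.sinh (θ * Real.sqrt (-K / N))

/-- The distortion coefficient `σ_{K,N}^{(t)}(θ)`, with value `+∞` when `K θ² ≤ N π²`. -/
def sigmaCoeff (K N t θ : ℝ) : ℝ≥0∞ :=
  if K * θ ^ 2 ≤ N * Real.pi ^ 2 then ⊤ else ENNReal.ofReal (sigmaAux K N t θ)

/-- The Rényi entropy `S_{N,m}(μ) = ∫ ρ^{(N-1)/N} dm` when `μ = ρ m ≪ m`, `+∞` otherwise. -/
def entS {α : Type*} [MeasurableSpace α] (m : Measure α) (N : ℝ) (μ : Measure α) : ℝ≥0∞ :=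
  if μ ≪ m then ∫⁻ x, (μ.rnDeriv m x) ^ ((N - 1) / N) ∂m else ⊤

section MMS

variable {X : Type*} [MetricSpace X] [MeasurableSpace X] [BorelSpace X]

/-- A quasi-Radon measure: a nonzero, complete, effectively locally finite Borel measure
with full support. -/
structure IsQuasiRadon (m : Measure X) : Prop where
  ne_zero : m ≠ 0
  complete : ∀ s t : Set X, s ⊆ t → MeasurableSet t → m t = 0 → MeasurableSet s
  effLocFinite : ∀ A : Set X, MeasurableSet A → 0 < m A →
    ∃ U : Set X, IsOpen U ∧ m U < ⊤ ∧ 0 < m (A ∩ U)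
  fullSupport : ∀ (x : X) (U : Set X), IsOpen U → x ∈ U → 0 < m U

/-- The singular set of `m`: points all of whose neighbourhoods have infinite measure. -/
def singularSet (m : Measure X) : Set X :=
  {x | ∀ U : Set X, IsOpen U → x ∈ U → m U = ⊤}

/-- Finite second moment. -/
def FiniteSecondMoment (μ : Measure X) : Prop :=
  ∃ x₀ : X, ∫⁻ x, edist x x₀ ^ 2 ∂μ < ⊤

/-- `π` is a coupling (admissible transport plan) between `μ` and `ν`. -/
def IsCoupling (π : Measure (X × X)) (μ ν : Measure X) : Prop :=
  π.map Prod.fst = μ ∧ π.map Prod.snd = ν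

/-- Quadratic transport cost of a plan. -/
def transportCost (π : Measure (X × X)) : ℝ≥0∞ := ∫⁻ p, edist p.1 p.2 ^ 2 ∂π

/-- Squared Wasserstein distance. -/
def W2sq (μ ν : Measure X) : ℝ≥0∞ :=
  ⨅ (π : Measure (X × X)) (_ : IsCoupling π μ ν), transportCost π

/-- Wasserstein distance `W₂`. -/
def W2 (μ ν : Measure X) : ℝ≥0∞ := W2sq μ ν ^ (1 / 2 : ℝ)

/-- `π` is an optimal coupling between `μ` and `ν` for the quadratic cost. -/
def IsOptimalCoupling (π : Measure (X × X)) (μ ν : Measure X) : Prop :=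
  IsCoupling π μ ν ∧ transportCost π = W2sq μ ν

/-- `π` is an optimal transport plan (between its own marginals). -/
def IsOptimalPlan (π : Measure (X × X)) : Prop :=
  IsOptimalCoupling π (π.map Prod.fst) (π.map Prod.snd)

/-- Evaluation of a curve at time `t ∈ [0,1]`. -/
def evt (t : ℝ) (γ : C(unitInterval, X)) : X := γ (Set.projIcc (0:ℝ) 1 zero_le_one t)

/-- Constant speed minimizing geodesic, as a continuous curve on `[0,1]`. -/
def IsGeodesicMap (γ : C(unitInterval, X)) : Prop :=
  ∀ s t : unitInterval, dist (γ s) (γ t) = |(t : ℝ) - (s : ℝ)| * dist (γ 0) (γ 1)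

/-- Optimal geodesic plan between `μ0` and `μ1`: a probability measure on curves,
concentrated on constant-speed geodesics, with the prescribed marginals at times `0, 1`,
whose `(e₀,e₁)`-pushforward is an optimal coupling. -/
def IsOptGeoPlan (π : Measure C(unitInterval, X)) (μ0 μ1 : Measure X) : Prop :=
  IsProbabilityMeasure π ∧ π {γ | ¬ IsGeodesicMap γ} = 0 ∧
  π.map (evt 0) = μ0 ∧ π.map (evt 1) = μ1 ∧
  IsOptimalCoupling (π.map fun γ => (evt 0 γ, evt 1 γ)) μ0 μ1

/-- A non-branching set of geodesics. -/
def IsNonBranchingSet (G : Set C(unitInterval, X)) : Prop :=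
  (∀ γ ∈ G, IsGeodesicMap γ) ∧
  ∀ γ₁ ∈ G, ∀ γ₂ ∈ G, ∀ t : unitInterval, 0 < (t : ℝ) → (t : ℝ) < 1 →
    (∀ s : unitInterval, (s : ℝ) ≤ (t : ℝ) → γ₁ s = γ₂ s) → γ₁ = γ₂

/-- Essentially non-branching metric measure space. -/
def EssentiallyNonBranching (m : Measure X) : Prop :=
  ∀ μ0 μ1 : Measure X, IsProbabilityMeasure μ0 → IsProbabilityMeasure μ1 →
    FiniteSecondMoment μ0 → FiniteSecondMoment μ1 → μ0 ≪ m → μ1 ≪ m →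
    ∀ π : Measure C(unitInterval, X), IsOptGeoPlan π μ0 μ1 →
      ∃ G : Set C(unitInterval, X), IsNonBranchingSet G ∧ π Gᶜ = 0

/-- Membership in `P*_N(X,m)`: probability, finite second moment, absolutely continuous,
bounded support, finite Rényi entropy. -/
def MemPstarN (m : Measure X) (N : ℝ) (μ : Measure X) : Prop :=
  IsProbabilityMeasure μ ∧ FiniteSecondMoment μ ∧ μ ≪ m ∧
  Bornology.IsBounded (msupport μ) ∧ entS m N μ < ⊤

/-- The functional `R_{K,N}^{(t)}(π | m)`. -/
def RKN (m : Measure X) (K N t : ℝ) (μ0 μ1 : Measure X) (π : Measure (X × X)) : ℝ≥0∞ :=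
  ∫⁻ p, sigmaCoeff K N (1 - t) (dist p.1 p.2) * (μ0.rnDeriv m p.1) ^ (-(1 / N))
      + sigmaCoeff K N t (dist p.1 p.2) * (μ1.rnDeriv m p.2) ^ (-(1 / N)) ∂π

/-- A constant speed `W₂`-geodesic parameterized on `[0,1]`. -/
def IsW2GeodesicOn (γ : ℝ → Measure X) : Prop :=
  ∀ s ∈ Icc (0:ℝ) 1, ∀ t ∈ Icc (0:ℝ) 1,
    W2 (γ s) (γ t) = ENNReal.ofReal |t - s| * W2 (γ 0) (γ 1)

/-- The reduced curvature-dimension condition `CD*(K,N)` for marginals supported in `C`. -/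
def CDstarOn (m : Measure X) (K N : ℝ) (C : Set X) : Prop :=
  ∀ μ0 μ1 : Measure X, MemPstarN m N μ0 → MemPstarN m N μ1 →
    msupport μ0 ⊆ C → msupport μ1 ⊆ C →
    ∃ π : Measure (X × X), IsOptimalCoupling π μ0 μ1 ∧
      ∃ γ : ℝ → Measure X, γ 0 = μ0 ∧ γ 1 = μ1 ∧ IsW2GeodesicOn γ ∧
        (∀ t ∈ Icc (0:ℝ) 1, MemPstarN m N (γ t)) ∧
        ∀ t ∈ Icc (0:ℝ) 1, ∀ N' ∈ Ico N (0:ℝ), entS m N' (γ t) ≤ RKN m K N' t μ0 μ1 π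

/-- The reduced curvature-dimension condition `CD*(K,N)` for `N < 0`. -/
def CDstar (m : Measure X) (K N : ℝ) : Prop :=
  ∀ μ0 μ1 : Measure X, MemPstarN m N μ0 → MemPstarN m N μ1 →
    ∃ π : Measure (X × X), IsOptimalCoupling π μ0 μ1 ∧
      ∃ γ : ℝ → Measure X, γ 0 = μ0 ∧ γ 1 = μ1 ∧ IsW2GeodesicOn γ ∧
        (∀ t ∈ Icc (0:ℝ) 1, MemPstarN m N (γ t)) ∧
        ∀ t ∈ Icc (0:ℝ) 1, ∀ N' ∈ Ico N (0:ℝ), entS m N' (γ t) ≤ RKN m K N' t μ0 μ1 π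

/-- The condition `CD*(K-,N)` for marginals supported in `C`. -/
def CDstarMinusOn (m : Measure X) (K N : ℝ) (C : Set X) : Prop :=
  ∀ K' < K, CDstarOn m K' N C

/-- The condition `CD*(K-,N)`. -/
def CDstarMinus (m : Measure X) (K N : ℝ) : Prop :=
  ∀ K' < K, CDstar m K' N

/-- `P*_N(X,m)` is a geodesic space: any two of its members are joined by a
`W₂`-geodesic lying in `P*_N(X,m)`. -/
def PstarNGeodesicSpace (m : Measure X) (N : ℝ) : Prop :=
  ∀ μ0 μ1 : Measure X, MemPstarN m N μ0 → MemPstarN m N μ1 →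
    ∃ γ : ℝ → Measure X, γ 0 = μ0 ∧ γ 1 = μ1 ∧ IsW2GeodesicOn γ ∧
      ∀ t ∈ Icc (0:ℝ) 1, MemPstarN m N (γ t)

/-- `θ⁰` associated to a geodesic plan: the infimum of `d(γ₀,γ₁)` over the support. -/
def theta0 (π : Measure C(unitInterval, X)) : ℝ :=
  sInf ((fun γ => dist (evt 0 γ) (evt 1 γ)) '' msupport π)

/-- Property `C(k)` of the globalization argument. -/
def PropC (m : Measure X) (K' N R : ℝ) (o : X) (k : ℕ) : Prop :=
  ∀ π : Measure C(unitInterval, X),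
    IsOptGeoPlan π (π.map (evt 0)) (π.map (evt 1)) →
    (∀ t ∈ Icc (0:ℝ) 1, MemPstarN m N (π.map (evt t))) →
    msupport (π.map (evt 0)) ⊆ ball o R →
    msupport (π.map (evt 1)) ⊆ ball o R →
    ∀ s ∈ Icc (0:ℝ) 1, ∀ t ∈ Icc (0:ℝ) 1, t - s = (2:ℝ)⁻¹ ^ k →
      ∀ r ∈ Icc (0:ℝ) 1, ∀ N' ∈ Ico N (0:ℝ),
        entS m N' (π.map (evt (s + r * (t - s)))) ≤
          sigmaCoeff K' N' (1 - r) (theta0 π / 2 ^ k) * entS m N' (π.map (evt s)) +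
          sigmaCoeff K' N' r (theta0 π / 2 ^ k) * entS m N' (π.map (evt t))

/-- `θ` between two marginals: inf of distances between the supports when `K ≥ 0`,
sup when `K < 0`. -/
def thetaKN (K : ℝ) (μ0 μ1 : Measure X) : ℝ :=
  if 0 ≤ K then sInf (Set.image2 dist (msupport μ0) (msupport μ1))
  else sSup (Set.image2 dist (msupport μ0) (msupport μ1))

end MMS

private lemma tsum_rpow_le_rpow_tsum (f : ℕ → ℝ≥0∞) {p : ℝ} (hp : 1 ≤ p) :
    ∑' j, f j ^ p ≤ (∑' j, f j) ^ p := by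
  rw [ENNReal.tsum_eq_iSup_sum (f := fun j => f j ^ p)]
  refine iSup_le fun s => ?_
  have h1 : ∑ j ∈ s, f j ^ p ≤ (∑ j ∈ s, f j) ^ p := by
    classical
    induction s using Finset.induction_on with
    | empty => simp [ENNReal.zero_rpow_of_pos (lt_of_lt_of_le zero_lt_one hp)]
    | @insert x s hx ih =>
      rw [Finset.sum_insert hx, Finset.sum_insert hx]
      exact le_trans (add_le_add_right ih _) (ENNReal.add_rpow_le_rpow_add _ _ hp)
  exact h1.trans (ENNReal.rpow_le_rpow (ENNReal.sum_le_tsum s)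
    (le_trans zero_le_one hp))

private lemma tsum_rpow_eq_of_disjoint (f : ℕ → ℝ≥0∞) {p : ℝ} (hp : 0 < p)
    (h : ∀ i j, i ≠ j → f i * f j = 0) : (∑' j, f j) ^ p = ∑' j, f j ^ p := by
  by_cases hz : ∀ j, f j = 0
  · simp [hz, ENNReal.zero_rpow_of_pos hp]
  · push_neg at hz
    obtain ⟨j0, hj0⟩ := hz
    have hzero : ∀ i, i ≠ j0 → f i = 0 := fun i hi =>
      (mul_eq_zero.1 (h i j0 hi)).resolve_right hj0
    rw [tsum_eq_single j0 hzero, tsum_eq_single j0 (fun i hi => by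
      rw [hzero i hi, ENNReal.zero_rpow_of_pos hp])]


/-- superadditivity of the Rényi entropy for countable convex
combinations, with equality when the summands are pairwise mutually singular. -/
theorem renyi_entropy_countable_convex_combination
    {α : Type*} [MeasurableSpace α] (m : Measure α) [SigmaFinite m]
    (N N' : ℝ) (hN : N < 0) (hN' : N' ∈ Ico N (0:ℝ))
    (a : ℕ → ℝ≥0∞) (ha : ∑' j, a j = 1)
    (μ : ℕ → Measure α)
    (hprob : ∀ j, IsProbabilityMeasure (μ j)) (hac : ∀ j, μ j ≪ m) :
    (∑' j, a j ^ (1 - 1 / N') * entS m N' (μ j)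
        ≤ entS m N' (Measure.sum fun j => a j • μ j)) ∧
    (Pairwise (fun i j => Measure.MutuallySingular (μ i) (μ j)) →
      entS m N' (Measure.sum fun j => a j • μ j)
        = ∑' j, a j ^ (1 - 1 / N') * entS m N' (μ j)) := by
  have hN'0 : N' < 0 := hN'.2
  have hN'ne : N' ≠ 0 := hN'0.ne
  set p : ℝ := (N' - 1) / N' with hpdef
  have hpe : 1 - 1 / N' = p := by rw [hpdef, sub_div, div_self hN'ne]
  have hp1 : 1 ≤ p := by
    have h1 : 1 / N' < 0 := one_div_neg.2 hN'0
    rw [← hpe]; linarith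
  have hp0 : 0 < p := lt_of_lt_of_le zero_lt_one hp1
  set ρ : ℕ → α → ℝ≥0∞ := fun j => (μ j).rnDeriv m with hρdef
  have hρm : ∀ j, Measurable (ρ j) := fun j => Measure.measurable_rnDeriv _ _
  set g : α → ℝ≥0∞ := fun x => ∑' j, a j * ρ j x with hgdef
  have hgm : Measurable g := Measurable.ennreal_tsum fun j => (hρm j).const_mul _
  have hsum_eq : (Measure.sum fun j => a j • μ j) = m.withDensity g := by
    have h1 : ∀ j, a j • μ j = m.withDensity (fun x => a j * ρ j x) := fun j => by
      rw [show (fun x => a j * ρ j x) = a j • ρ j from rfl,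
        withDensity_smul _ (hρm j), Measure.withDensity_rnDeriv_eq _ _ (hac j)]
    rw [funext h1, ← withDensity_tsum fun j => (hρm j).const_mul _]
    congr 1
    funext x
    exact ENNReal.tsum_apply
  have hac_sum : (Measure.sum fun j => a j • μ j) ≪ m := by
    rw [hsum_eq]; exact withDensity_absolutelyContinuous _ _
  have hrn : (Measure.sum fun j => a j • μ j).rnDeriv m =ᵐ[m] g := by
    rw [hsum_eq]; exact Measure.rnDeriv_withDensity m hgm
  have hentsum : entS m N' (Measure.sum fun j => a j • μ j) = ∫⁻ x, g x ^ p ∂m := by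
    simp only [entS, if_pos hac_sum]
    refine lintegral_congr_ae (hrn.mono fun x hx => ?_)
    dsimp only
    rw [hx]
  have hentj : ∀ j, entS m N' (μ j) = ∫⁻ x, ρ j x ^ p ∂m := fun j => by
    simp only [entS, if_pos (hac j)]
    rfl
  have hRHS : ∑' j, a j ^ (1 - 1 / N') * entS m N' (μ j)
      = ∫⁻ x, ∑' j, (a j * ρ j x) ^ p ∂m := by
    rw [lintegral_tsum fun j => ((hρm j).const_mul _).pow_const p |>.aemeasurable]
    congr 1
    funext j
    rw [hentj j, hpe, ← lintegral_const_mul _ ((hρm j).pow_const p)]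
    congr 1; funext x
    rw [ENNReal.mul_rpow_of_nonneg _ _ hp0.le]
  constructor
  · rw [hRHS, hentsum]
    exact lintegral_mono fun x => tsum_rpow_le_rpow_tsum _ hp1
  · intro hms
    have key : ∀ᵐ x ∂m, ∀ i j, i ≠ j → ρ i x * ρ j x = 0 := by
      rw [ae_all_iff]
      intro i
      rw [ae_all_iff]
      intro j
      rcases eq_or_ne i j with rfl | hij
      · filter_upwards with x h; exact absurd rfl h
      · obtain ⟨s, hsm, h1, h2⟩ := hms hij
        have hi0 : ∀ᵐ x ∂m, x ∈ s → ρ i x = 0 := by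
          rw [← setLIntegral_eq_zero_iff hsm (hρm i)]
          rw [Measure.setLIntegral_rnDeriv (hac i)]
          exact h1
        have hj0 : ∀ᵐ x ∂m, x ∈ sᶜ → ρ j x = 0 := by
          rw [← setLIntegral_eq_zero_iff hsm.compl (hρm j)]
          rw [Measure.setLIntegral_rnDeriv (hac j)]
          exact h2
        filter_upwards [hi0, hj0] with x hxi hxj _
        by_cases hx : x ∈ s
        · rw [hxi hx, zero_mul]
        · rw [hxj hx, mul_zero]
    rw [hRHS, hentsum]
    refine lintegral_congr_ae (key.mono fun x hx => ?_)
    refine tsum_rpow_eq_of_disjoint _ hp0 fun i j hij => ?_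
    rw [mul_mul_mul_comm, hx i j hij, mul_zero]
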